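/- Let D₀, D₁, …, D_T be a martingale difference sequence taking values in a space with norm ‖·‖_F, and suppose Σ_{t=0}^T ‖D_t‖_∞² ≤ c_T² where ‖D_t‖_∞ denotes the essential supremum of ‖D_t‖_F. Then for every ε > 0, P[ sup_{s ≤ T} ‖Σ_{t=0}^s D_t‖_F ≥ ε ] ≤ 2 exp(-ε² / (2 c_T²)). -/

import Mathlib

open MeasureTheory Real
open scoped ENNReal NNReal

set_option linter.unusedSectionVars false

namespace PinelisAux

lemma sinh_le_mul_cosh {t : ℝ} (ht : 0 ≤ t) : Real.sinh t ≤ t * Real.cosh t := by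
  have key : MonotoneOn (fun t : ℝ => t * Real.cosh t - Real.sinh t) (Set.Ici 0) := by
    have hd : ∀ x : ℝ, HasDerivAt (fun t : ℝ => t * Real.cosh t - Real.sinh t)
        (x * Real.sinh x) x := by
      intro x
      have h := ((hasDerivAt_id' x).mul (Real.hasDerivAt_cosh x)).sub (Real.hasDerivAt_sinh x)
      exact h.congr_deriv (by ring)
    refine monotoneOn_of_deriv_nonneg (convex_Ici 0) ?_ ?_ ?_
    · exact ((continuous_id.mul Real.continuous_cosh).sub Real.continuous_sinh).continuousOn
    · exact fun x _ => (hd x).differentiableAt.differentiableWithinAt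
    · intro x hx
      rw [interior_Ici] at hx
      rw [(hd x).deriv]
      exact mul_nonneg (le_of_lt hx) (Real.sinh_nonneg_iff.2 (le_of_lt hx))
  have h := key (Set.self_mem_Ici) (Set.mem_Ici.2 ht) ht
  simpa using h

lemma sinh_div_mono {r s : ℝ} (hr : 0 < r) (hrs : r ≤ s) :
    Real.sinh r / r ≤ Real.sinh s / s := by
  have hs : 0 < s := lt_of_lt_of_le hr hrs
  rw [div_le_div_iff₀ hr hs]
  have hts : s = r + (s - r) := by ring
  rw [hts, Real.sinh_add]
  have ht : (0:ℝ) ≤ s - r := by linarith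
  have h1 : 1 ≤ Real.cosh (s - r) := Real.one_le_cosh _
  have h2 : s - r ≤ Real.sinh (s - r) := Real.self_le_sinh_iff.2 ht
  have h3 : Real.sinh r ≤ r * Real.cosh r := sinh_le_mul_cosh hr.le
  have h4 : 0 ≤ Real.sinh r := Real.sinh_nonneg_iff.2 hr.le
  have h5 : 0 ≤ Real.cosh r := (Real.cosh_pos r).le
  nlinarith [mul_le_mul h3 h2 ht (by positivity), mul_le_mul_of_nonneg_left h1 (mul_nonneg h4 hr.le)]


lemma convexOn_cosh_sqrt : ConvexOn ℝ (Set.Ici 0) (fun u : ℝ => Real.cosh (Real.sqrt u)) := by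
  have hd : ∀ u : ℝ, 0 < u → HasDerivAt (fun u : ℝ => Real.cosh (Real.sqrt u))
      (Real.sinh (Real.sqrt u) * (1 / (2 * Real.sqrt u))) u := by
    intro u hu
    exact (Real.hasDerivAt_cosh _).comp u (Real.hasDerivAt_sqrt hu.ne')
  refine MonotoneOn.convexOn_of_deriv (convex_Ici 0) ?_ ?_ ?_
  · exact (Real.continuous_cosh.comp Real.continuous_sqrt).continuousOn
  · intro u hu
    rw [interior_Ici] at hu
    exact (hd u hu).differentiableAt.differentiableWithinAt
  · rw [interior_Ici]
    intro u hu v hv huv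
    rw [(hd u hu).deriv, (hd v hv).deriv]
    have hsu : 0 < Real.sqrt u := Real.sqrt_pos.2 hu
    have hsv : 0 < Real.sqrt v := Real.sqrt_pos.2 hv
    have h := sinh_div_mono hsu (Real.sqrt_le_sqrt huv)
    have hu' : Real.sinh (Real.sqrt u) * (1 / (2 * Real.sqrt u))
        = (Real.sinh (Real.sqrt u) / Real.sqrt u) / 2 := by field_simp
    have hv' : Real.sinh (Real.sqrt v) * (1 / (2 * Real.sqrt v))
        = (Real.sinh (Real.sqrt v) / Real.sqrt v) / 2 := by field_simp
    rw [hu', hv']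
    linarith

lemma claimA {a r x : ℝ} (ha : 0 ≤ a) (hr : 0 < r) (hx : |x| ≤ r) :
    Real.cosh (Real.sqrt (a ^ 2 + 2 * a * x + r ^ 2)) ≤
      Real.cosh a * Real.cosh r + x / r * (Real.sinh a * Real.sinh r) := by
  obtain ⟨hx1, hx2⟩ := abs_le.1 hx
  set θ : ℝ := (x + r) / (2 * r) with hθdef
  have hθ0 : 0 ≤ θ := by apply div_nonneg <;> linarith
  have hθ1 : 0 ≤ 1 - θ := by
    rw [hθdef, sub_nonneg, div_le_one (by positivity)]; linarith
  have hsum : θ + (1 - θ) = 1 := by ring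
  have hmem1 : ((a + r) ^ 2 : ℝ) ∈ Set.Ici (0:ℝ) := Set.mem_Ici.2 (by positivity)
  have hmem2 : ((a - r) ^ 2 : ℝ) ∈ Set.Ici (0:ℝ) := Set.mem_Ici.2 (by positivity)
  have hcvx := convexOn_cosh_sqrt.2 hmem1 hmem2 hθ0 hθ1 hsum
  have hcomb : θ • (a + r) ^ 2 + (1 - θ) • (a - r) ^ 2 = a ^ 2 + 2 * a * x + r ^ 2 := by
    simp only [smul_eq_mul, hθdef]
    field_simp
    ring
  rw [hcomb] at hcvx
  simp only [smul_eq_mul] at hcvx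
  rw [Real.sqrt_sq (by linarith), Real.sqrt_sq_eq_abs, Real.cosh_abs] at hcvx
  refine hcvx.trans (le_of_eq ?_)
  rw [Real.cosh_add, Real.cosh_sub, hθdef]
  field_simp
  ring

lemma stage2 {a r Cd x : ℝ} (ha : 0 ≤ a) (hr : 0 < r) (hrC : r ≤ Cd) (hx : |x| ≤ r) :
    Real.cosh a * Real.cosh r + x / r * (Real.sinh a * Real.sinh r) ≤
      Real.cosh a * Real.cosh Cd + x / Cd * (Real.sinh a * Real.sinh Cd) := by
  have hC : 0 < Cd := hr.trans_le hrC
  obtain ⟨hx1, hx2⟩ := abs_le.1 hx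
  have hΔ' : Cd * Real.sinh r ≤ r * Real.sinh Cd := by
    have h := sinh_div_mono hr hrC
    rw [div_le_div_iff₀ hr hC] at h
    linarith
  have hkey' : r * Real.sinh Cd - Cd * Real.sinh r ≤ Cd * Real.cosh Cd - Cd * Real.cosh r := by
    have h1 : Real.cosh Cd - Real.sinh Cd = Real.exp (-Cd) := Real.cosh_sub_sinh _
    have h2 : Real.cosh r - Real.sinh r = Real.exp (-r) := Real.cosh_sub_sinh _
    have h3 : Real.exp (-r) - Real.exp (-Cd) ≤ Cd - r := by
      have e1 : Real.exp (-r) ≤ 1 := Real.exp_le_one_iff.2 (by linarith)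
      have e4 : Real.exp (-(Cd - r)) ≤ 1 := Real.exp_le_one_iff.2 (by linarith)
      have e2 : 1 - Real.exp (-(Cd - r)) ≤ Cd - r := by
        have := Real.add_one_le_exp (-(Cd - r)); linarith
      have e3 : Real.exp (-Cd) = Real.exp (-r) * Real.exp (-(Cd - r)) := by
        rw [← Real.exp_add]; ring_nf
      have e6 : Real.exp (-r) - Real.exp (-Cd) = Real.exp (-r) * (1 - Real.exp (-(Cd - r))) := by
        rw [e3]; ring
      rw [e6]
      calc Real.exp (-r) * (1 - Real.exp (-(Cd - r))) ≤ 1 * (Cd - r) :=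
            mul_le_mul e1 e2 (by linarith) zero_le_one
        _ = Cd - r := one_mul _
    have e5 : Cd ≤ Real.sinh Cd := Real.self_le_sinh_iff.2 hC.le
    have p1 : (Cd - r) * Cd ≤ (Cd - r) * Real.sinh Cd :=
      mul_le_mul_of_nonneg_left e5 (by linarith)
    have p2 : Cd * (Real.exp (-r) - Real.exp (-Cd)) ≤ Cd * (Cd - r) :=
      mul_le_mul_of_nonneg_left h3 hC.le
    nlinarith [p1, p2, congrArg (fun z => Cd * z) h1, congrArg (fun z => Cd * z) h2]
  -- polynomial form of the goal
  have hsa : 0 ≤ Real.sinh a := Real.sinh_nonneg_iff.2 ha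
  have hsc : Real.sinh a ≤ Real.cosh a := by
    have := Real.cosh_sub_sinh a
    have := Real.exp_pos (-a)
    linarith
  have hca : 0 < Real.cosh a := Real.cosh_pos a
  have hr' : r ≠ 0 := hr.ne'
  have hC' : Cd ≠ 0 := hC.ne'
  have hw' : 0 ≤ r * Real.sinh Cd - Cd * Real.sinh r := by linarith
  have q1 : (-x) * (Real.sinh a * (r * Real.sinh Cd - Cd * Real.sinh r)) ≤
      r * (Real.sinh a * (r * Real.sinh Cd - Cd * Real.sinh r)) :=
    mul_le_mul_of_nonneg_right (by linarith) (mul_nonneg hsa hw')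
  have q2 : r * (Real.sinh a * (r * Real.sinh Cd - Cd * Real.sinh r)) ≤
      r * (Real.cosh a * (r * Real.sinh Cd - Cd * Real.sinh r)) :=
    mul_le_mul_of_nonneg_left (mul_le_mul_of_nonneg_right hsc hw') hr.le
  have q3 : r * (Real.cosh a * (r * Real.sinh Cd - Cd * Real.sinh r)) ≤
      r * (Real.cosh a * (Cd * Real.cosh Cd - Cd * Real.cosh r)) :=
    mul_le_mul_of_nonneg_left (mul_le_mul_of_nonneg_left hkey' hca.le) hr.le
  have P : Cd * r * (Real.cosh a * Real.cosh r) + Cd * (x * (Real.sinh a * Real.sinh r)) ≤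
      Cd * r * (Real.cosh a * Real.cosh Cd) + r * (x * (Real.sinh a * Real.sinh Cd)) := by
    nlinarith [q1, q2, q3]
  have hpos : (0:ℝ) < Cd * r := by positivity
  have e_l : Real.cosh a * Real.cosh r + x / r * (Real.sinh a * Real.sinh r) =
      (Cd * r * (Real.cosh a * Real.cosh r) + Cd * (x * (Real.sinh a * Real.sinh r))) / (Cd * r) := by
    field_simp
  have e_r : Real.cosh a * Real.cosh Cd + x / Cd * (Real.sinh a * Real.sinh Cd) =
      (Cd * r * (Real.cosh a * Real.cosh Cd) + r * (x * (Real.sinh a * Real.sinh Cd))) / (Cd * r) := by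
    field_simp
  rw [e_l, e_r]
  exact (div_le_div_iff_of_pos_right hpos).2 P


section VectorKey
variable {E : Type*} [NormedAddCommGroup E] [InnerProductSpace ℝ E]

local notation "⟪" x ", " y "⟫" => @inner ℝ _ _ x y

lemma key_vector (f d : E) {Cd : ℝ} (h : ‖d‖ ≤ Cd) :
    Real.cosh ‖f + d‖ ≤ Real.cosh ‖f‖ * Real.cosh Cd +
      Real.sinh Cd / Cd * (Real.sinh ‖f‖ / ‖f‖ * ⟪f, d⟫) := by
  rcases eq_or_ne d 0 with hd | hd
  · subst hd
    simp only [add_zero, inner_zero_right, mul_zero, add_zero]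
    nlinarith [Real.one_le_cosh Cd, Real.cosh_pos ‖f‖]
  · have hr : 0 < ‖d‖ := norm_pos_iff.2 hd
    have hC : 0 < Cd := lt_of_lt_of_le hr h
    rcases eq_or_ne f 0 with hf | hf
    · subst hf
      simp only [zero_add, inner_zero_left, norm_zero, mul_zero, add_zero]
      rw [Real.cosh_zero, one_mul]
      exact Real.cosh_le_cosh.2 (by rw [abs_norm, abs_of_pos hC]; exact h)
    · have ha : 0 < ‖f‖ := norm_pos_iff.2 hf
      set a := ‖f‖ with hadef
      set r := ‖d‖ with hrdef
      set x : ℝ := ⟪f, d⟫ / a with hxdef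
      have hxr : |x| ≤ r := by
        rw [hxdef, abs_div, abs_of_pos ha, div_le_iff₀ ha]
        calc |⟪f, d⟫| ≤ a * r := abs_real_inner_le_norm f d
          _ = r * a := mul_comm _ _
      have hfd : ‖f + d‖ = Real.sqrt (a ^ 2 + 2 * a * x + r ^ 2) := by
        rw [← Real.sqrt_sq (norm_nonneg (f + d)), norm_add_sq_real]
        congr 2
        rw [hxdef]
        field_simp
        ring
      have h1 := claimA ha.le hr hxr
      have h2 := stage2 ha.le hr h hxr
      rw [hfd]
      refine (h1.trans h2).trans (le_of_eq ?_)
      have hax : ⟪f, d⟫ = a * x := by rw [hxdef]; field_simp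
      rw [hax]
      field_simp

lemma lower_vector (f d : E) :
    Real.cosh ‖f‖ + Real.sinh ‖f‖ / ‖f‖ * ⟪f, d⟫ ≤ Real.cosh ‖f + d‖ := by
  rcases eq_or_ne f 0 with hf | hf
  · subst hf
    simp only [inner_zero_left, mul_zero, add_zero, norm_zero, Real.cosh_zero, zero_add]
    exact Real.one_le_cosh _
  · have ha : 0 < ‖f‖ := norm_pos_iff.2 hf
    set a := ‖f‖ with hadef
    set x : ℝ := ⟪f, d⟫ / a with hxdef
    have hax : ⟪f, d⟫ = a * x := by rw [hxdef]; field_simp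
    have step1 : Real.cosh (a + x) ≤ Real.cosh ‖f + d‖ := by
      apply Real.cosh_le_cosh.2
      rw [abs_norm]
      have e : a + x = ⟪f, f + d⟫ / a := by
        rw [inner_add_right, real_inner_self_eq_norm_sq, hxdef, ← hadef]
        field_simp
      rw [e, abs_div, abs_of_pos ha, div_le_iff₀ ha]
      calc |⟪f, f + d⟫| ≤ a * ‖f + d‖ := abs_real_inner_le_norm _ _
        _ = ‖f + d‖ * a := mul_comm _ _
    have step2 : Real.cosh a + Real.sinh a * x ≤ Real.cosh (a + x) := by
      rw [Real.cosh_add]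
      have hsa : 0 ≤ Real.sinh a := Real.sinh_nonneg_iff.2 ha.le
      have hsc : Real.sinh a ≤ Real.cosh a := by
        have h1 := Real.cosh_sub_sinh a
        have h2 := Real.exp_pos (-a)
        linarith
      have hca : 0 < Real.cosh a := Real.cosh_pos a
      rcases le_or_gt 0 x with hx | hx
      · nlinarith [Real.one_le_cosh x, Real.self_le_sinh_iff.2 hx]
      · have hsx : Real.sinh x ≤ x := by
          have := Real.self_le_sinh_iff.2 (by linarith : (0:ℝ) ≤ -x)
          rw [Real.sinh_neg] at this
          linarith
        nlinarith [Real.add_one_le_exp x, Real.cosh_add_sinh x]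
    calc Real.cosh a + Real.sinh a / a * ⟪f, d⟫ = Real.cosh a + Real.sinh a * x := by
          rw [hax]; field_simp
      _ ≤ Real.cosh (a + x) := step2
      _ ≤ Real.cosh ‖f + d‖ := step1


end VectorKey

section CondExp
variable {Ω : Type*} {m m0 : MeasurableSpace Ω} {μ : @Measure Ω m0} [IsProbabilityMeasure μ]
variable {E : Type*} [NormedAddCommGroup E] [InnerProductSpace ℝ E] [CompleteSpace E]

local notation "⟪" x ", " y "⟫" => @inner ℝ _ _ x y

lemma integrable_inner_of_bdd {g D : Ω → E} (hg : AEStronglyMeasurable g μ) {K : ℝ}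
    (hgb : ∀ᵐ ω ∂μ, ‖g ω‖ ≤ K) (hD : Integrable D μ) :
    Integrable (fun ω => ⟪g ω, D ω⟫) μ := by
  refine Integrable.mono' (hD.norm.const_mul K) (hg.inner hD.aestronglyMeasurable) ?_
  filter_upwards [hgb] with ω hω
  calc ‖⟪g ω, D ω⟫‖ ≤ ‖g ω‖ * ‖D ω‖ := norm_inner_le_norm _ _
    _ ≤ K * ‖D ω‖ := mul_le_mul_of_nonneg_right hω (norm_nonneg _)

lemma integral_inner_simple (hm : m ≤ m0) {D : Ω → E} (hD : Integrable D μ)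
    (hDset : ∀ s, MeasurableSet[m] s → ∫ ω in s, D ω ∂μ = 0)
    (φ : @SimpleFunc Ω m E) : ∫ ω, ⟪φ ω, D ω⟫ ∂μ = 0 := by
  have hint : ∀ (ψ : @SimpleFunc Ω m E), Integrable (fun ω => ⟪ψ ω, D ω⟫) μ := by
    intro ψ
    obtain ⟨K, hK⟩ := @SimpleFunc.exists_forall_norm_le Ω E m _ ψ
    exact integrable_inner_of_bdd ((ψ.stronglyMeasurable.mono hm).aestronglyMeasurable)
      (Filter.Eventually.of_forall hK) hD
  refine @SimpleFunc.induction Ω E m _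
    (fun ψ => ∫ ω, ⟪ψ ω, D ω⟫ ∂μ = 0) ?_ ?_ φ
  · intro c s hs
    have heq : (fun ω => ⟪(@SimpleFunc.piecewise Ω E m s hs
        (@SimpleFunc.const Ω E m c) (@SimpleFunc.const Ω E m 0)) ω, D ω⟫)
        = fun ω => Set.indicator s (fun ω => ⟪c, D ω⟫) ω := by
      funext ω
      by_cases hω : ω ∈ s
      · simp [SimpleFunc.piecewise_apply, hω, Set.indicator_of_mem]
      · simp [SimpleFunc.piecewise_apply, hω, Set.indicator_of_notMem]
    rw [heq, integral_indicator (hm s hs), integral_inner hD.integrableOn, hDset s hs,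
      inner_zero_right]
  · intro f g _ hf hg
    have heq : (fun ω => ⟪(f + g) ω, D ω⟫)
        = fun ω => ⟪f ω, D ω⟫ + ⟪g ω, D ω⟫ := by
      funext ω
      rw [@SimpleFunc.coe_add Ω E m _ f g, Pi.add_apply, inner_add_left]
    rw [heq, integral_add (hint f) (hint g), hf, hg, add_zero]

lemma integral_inner_eq_zero (hm : m ≤ m0) {g D : Ω → E} (hg : StronglyMeasurable[m] g) {K : ℝ}
    (hgb : ∀ᵐ ω ∂μ, ‖g ω‖ ≤ K) (hD : Integrable D μ)
    (hDset : ∀ s, MeasurableSet[m] s → ∫ ω in s, D ω ∂μ = 0) :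
    ∫ ω, ⟪g ω, D ω⟫ ∂μ = 0 := by
  set K' := max K 0 with hK'def
  have hK'0 : 0 ≤ K' := le_max_right _ _
  have hA : MeasurableSet[m] {ω | ‖g ω‖ ≤ K'} := hg.norm.measurable (measurableSet_Iic (a := K'))
  set g' := Set.indicator {ω | ‖g ω‖ ≤ K'} g with hg'def
  have hg' : StronglyMeasurable[m] g' := hg.indicator hA
  have hb' : ∀ ω, ‖g' ω‖ ≤ K' := by
    intro ω
    by_cases hω : ω ∈ {ω | ‖g ω‖ ≤ K'}
    · rw [hg'def, Set.indicator_of_mem hω]; exact hω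
    · rw [hg'def, Set.indicator_of_notMem hω, norm_zero]; exact hK'0
  have hae : g' =ᵐ[μ] g := by
    filter_upwards [hgb] with ω hω
    exact Set.indicator_of_mem (show ω ∈ {ω | ‖g ω‖ ≤ K'} from hω.trans (le_max_left _ _)) g
  have hlim : Filter.Tendsto (fun n => ∫ ω, ⟪hg'.approxBounded K' n ω, D ω⟫ ∂μ)
      Filter.atTop (nhds (∫ ω, ⟪g' ω, D ω⟫ ∂μ)) := by
    apply tendsto_integral_of_dominated_convergence (bound := fun ω => K' * ‖D ω‖)
    · exact fun n => (((hg'.approxBounded K' n).stronglyMeasurable.mono hm).aestronglyMeasurable).inner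
        hD.aestronglyMeasurable
    · exact hD.norm.const_mul K'
    · intro n
      filter_upwards with ω
      calc ‖⟪hg'.approxBounded K' n ω, D ω⟫‖ ≤ ‖hg'.approxBounded K' n ω‖ * ‖D ω‖ :=
            norm_inner_le_norm _ _
        _ ≤ K' * ‖D ω‖ := mul_le_mul_of_nonneg_right
            (hg'.norm_approxBounded_le hK'0 n ω) (norm_nonneg _)
    · filter_upwards with ω
      exact (hg'.tendsto_approxBounded_of_norm_le (hb' ω)).inner tendsto_const_nhds
  have hz : ∀ n, ∫ ω, ⟪hg'.approxBounded K' n ω, D ω⟫ ∂μ = 0 :=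
    fun n => integral_inner_simple hm hD hDset _
  have h0 : ∫ ω, ⟪g' ω, D ω⟫ ∂μ = 0 := by
    refine tendsto_nhds_unique hlim ?_
    simpa [hz] using (tendsto_const_nhds : Filter.Tendsto (fun _ : ℕ => (0:ℝ)) Filter.atTop _)
  rw [← h0]
  apply integral_congr_ae
  filter_upwards [hae] with ω hω
  rw [hω]

lemma condexp_inner_eq_zero (hm : m ≤ m0) {g D : Ω → E} (hg : StronglyMeasurable[m] g) {K : ℝ}
    (hgb : ∀ᵐ ω ∂μ, ‖g ω‖ ≤ K) (hD : Integrable D μ) (hD0 : μ[D|m] =ᵐ[μ] 0) :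
    μ[fun ω => ⟪g ω, D ω⟫|m] =ᵐ[μ] 0 := by
  haveI : SigmaFinite (μ.trim hm) := inferInstance
  have hDset : ∀ s, MeasurableSet[m] s → ∫ ω in s, D ω ∂μ = 0 := by
    intro s hs
    rw [← setIntegral_condExp hm hD hs]
    calc ∫ x in s, (μ[D|m]) x ∂μ = ∫ x in s, (0:E) ∂μ :=
          integral_congr_ae (ae_restrict_of_ae hD0)
      _ = 0 := by simp
  have hf : Integrable (fun ω => ⟪g ω, D ω⟫) μ :=
    integrable_inner_of_bdd ((hg.mono hm).aestronglyMeasurable) hgb hD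
  refine (ae_eq_condExp_of_forall_setIntegral_eq hm hf
    (fun s _ _ => integrableOn_zero) ?_ ?_).symm
  · intro s hs _
    have heq : ∀ ω, Set.indicator s (fun ω => ⟪g ω, D ω⟫) ω
        = ⟪Set.indicator s g ω, D ω⟫ := by
      intro ω
      by_cases hω : ω ∈ s
      · rw [Set.indicator_of_mem hω, Set.indicator_of_mem hω]
      · rw [Set.indicator_of_notMem hω, Set.indicator_of_notMem hω, inner_zero_left]
    have : ∫ ω in s, ⟪g ω, D ω⟫ ∂μ = 0 := by
      rw [← integral_indicator (hm s hs)]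
      simp only [heq]
      refine integral_inner_eq_zero hm (hg.indicator hs) (K := max K 0) ?_ hD hDset
      filter_upwards [hgb] with ω hω
      by_cases hω' : ω ∈ s
      · rw [Set.indicator_of_mem hω']; exact hω.trans (le_max_left _ _)
      · rw [Set.indicator_of_notMem hω', norm_zero]; exact le_max_right _ _
    rw [this]
    simp
  · exact StronglyMeasurable.aestronglyMeasurable stronglyMeasurable_const


end CondExp

end PinelisAux

open PinelisAux

local notation "⟪" x ", " y "⟫" => @inner ℝ _ _ x y

theorem stmt9 {Ω : Type*} {m : MeasurableSpace Ω} {μ : Measure Ω} [IsProbabilityMeasure μ]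
    {E : Type*} [NormedAddCommGroup E] [InnerProductSpace ℝ E] [CompleteSpace E]
    (ℱ : Filtration ℕ m)
    (D : ℕ → Ω → E) (T : ℕ)
    (hadapted : StronglyAdapted ℱ D)
    (hint : ∀ t, Integrable (D t) μ)
    (hmean0 : ∫ ω, D 0 ω ∂μ = 0)
    (hmds : ∀ t : ℕ, μ[D (t + 1) | ℱ t] =ᵐ[μ] 0)
    (c : ℝ) (C : ℕ → ℝ)
    (hC : ∀ t, ∀ᵐ ω ∂μ, ‖D t ω‖ ≤ C t)
    (hc : ∑ t ∈ Finset.range (T + 1), C t ^ 2 ≤ c ^ 2)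
    (ε : ℝ) (hε : 0 < ε) :
    (μ {ω | ∃ s ≤ T, ε ≤ ‖∑ t ∈ Finset.range (s + 1), D t ω‖}).toReal ≤
      2 * Real.exp (-ε ^ 2 / (2 * c ^ 2)) := by
  classical
  by_cases htriv : 1 ≤ 2 * Real.exp (-ε ^ 2 / (2 * c ^ 2))
  · refine le_trans ?_ htriv
    have h1 : μ {ω | ∃ s ≤ T, ε ≤ ‖∑ t ∈ Finset.range (s + 1), D t ω‖} ≤ 1 := prob_le_one
    calc (μ _).toReal ≤ (1 : ℝ≥0∞).toReal := ENNReal.toReal_mono ENNReal.one_ne_top h1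
      _ = 1 := by simp
  · have hc0 : c ≠ 0 := by
      rintro rfl
      exact htriv (by norm_num)
    have hc2 : 0 < c ^ 2 := lt_of_le_of_ne (sq_nonneg c) (Ne.symm (pow_ne_zero 2 hc0))
    set lam : ℝ := ε / c ^ 2 with hlam
    have hlam0 : 0 < lam := div_pos hε hc2
    set F : ℕ → Ω → E := fun s ω => lam • ∑ t ∈ Finset.range (s + 1), D t ω with hF
    set X : ℕ → Ω → ℝ := fun s ω => Real.cosh ‖F s ω‖ with hX
    haveI : (ae μ).NeBot := ae_neBot.2 (IsProbabilityMeasure.ne_zero μ)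
    have hCnn : ∀ t, 0 ≤ C t := fun t => by
      obtain ⟨ω, hω⟩ := (hC t).exists
      exact (norm_nonneg _).trans hω
    have hFadp : ∀ s, StronglyMeasurable[ℱ s] (F s) := by
      intro s
      apply StronglyMeasurable.const_smul
      apply Finset.stronglyMeasurable_fun_sum
      intro t ht
      exact (hadapted t).mono (ℱ.mono (Nat.lt_succ_iff.1 (Finset.mem_range.1 ht)))
    have hXadp : ∀ s, StronglyMeasurable[ℱ s] (X s) := fun s =>
      Real.continuous_cosh.comp_stronglyMeasurable (hFadp s).norm
    set B : ℕ → ℝ := fun s => lam * ∑ t ∈ Finset.range (s + 1), C t with hB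
    have hBnn : ∀ s, 0 ≤ B s := fun s =>
      mul_nonneg hlam0.le (Finset.sum_nonneg fun t _ => hCnn t)
    have hCae : ∀ᵐ ω ∂μ, ∀ t, ‖D t ω‖ ≤ C t := ae_all_iff.2 hC
    have hFbd : ∀ s, ∀ᵐ ω ∂μ, ‖F s ω‖ ≤ B s := by
      intro s
      filter_upwards [hCae] with ω hω
      calc ‖F s ω‖ = lam * ‖∑ t ∈ Finset.range (s + 1), D t ω‖ := by
            rw [hF, norm_smul, Real.norm_eq_abs, abs_of_pos hlam0]
        _ ≤ lam * ∑ t ∈ Finset.range (s + 1), C t := by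
            apply mul_le_mul_of_nonneg_left _ hlam0.le
            exact (norm_sum_le _ _).trans (Finset.sum_le_sum fun t _ => hω t)
    have hXbd : ∀ s, ∀ᵐ ω ∂μ, ‖X s ω‖ ≤ Real.cosh (B s) := by
      intro s
      filter_upwards [hFbd s] with ω hω
      rw [hX, Real.norm_eq_abs, abs_of_pos (Real.cosh_pos _)]
      exact Real.cosh_le_cosh.2 (by rw [abs_norm, abs_of_nonneg (hBnn s)]; exact hω)
    have hXint : ∀ s, Integrable (X s) μ := fun s =>
      Integrable.mono' (integrable_const _) ((hXadp s).mono (ℱ.le s)).aestronglyMeasurable (hXbd s)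
    have hXnn : ∀ s (ω : Ω), 0 ≤ X s ω := fun s ω => (Real.cosh_pos _).le
    set g : ℕ → Ω → E := fun s ω => (Real.sinh ‖F s ω‖ / ‖F s ω‖) • F s ω with hg
    have hgadp : ∀ s, StronglyMeasurable[ℱ s] (g s) := by
      intro s
      exact (((Real.measurable_sinh.comp (hFadp s).norm.measurable).div
        (hFadp s).norm.measurable).stronglyMeasurable).smul (hFadp s)
    have hgbd : ∀ s, ∀ᵐ ω ∂μ, ‖g s ω‖ ≤ Real.sinh (B s) := by
      intro s
      filter_upwards [hFbd s] with ω hω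
      rw [hg]
      by_cases h0 : F s ω = 0
      · simp only [h0, smul_zero, norm_zero]
        exact Real.sinh_nonneg_iff.2 (hBnn s)
      · have ha : 0 < ‖F s ω‖ := norm_pos_iff.2 h0
        rw [norm_smul, Real.norm_eq_abs, abs_div,
          abs_of_nonneg (Real.sinh_nonneg_iff.2 (norm_nonneg _)), abs_of_pos ha,
          div_mul_cancel₀ _ ha.ne']
        exact Real.sinh_le_sinh.2 hω
    have hFstep : ∀ (s : ℕ) (ω : Ω), F (s + 1) ω = F s ω + lam • D (s + 1) ω := by
      intro s ω
      rw [hF]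
      simp only
      rw [Finset.sum_range_succ, smul_add]
    have hDint : ∀ s : ℕ, Integrable (fun ω => lam • D (s + 1) ω) μ := fun s =>
      Integrable.smul lam (hint (s + 1))
    have hDcond : ∀ s : ℕ, μ[fun ω => lam • D (s + 1) ω|ℱ s] =ᵐ[μ] 0 := by
      intro s
      refine (condExp_smul lam (D (s + 1)) (ℱ s)).trans ?_
      filter_upwards [hmds s] with ω hω
      simp only [Pi.smul_apply, hω, Pi.zero_apply, smul_zero]
    have hkey : ∀ s : ℕ, ∀ᵐ ω ∂μ, X (s + 1) ω ≤ X s ω * Real.cosh (lam * C (s + 1)) +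
        Real.sinh (lam * C (s + 1)) / (lam * C (s + 1)) * ⟪g s ω, lam • D (s + 1) ω⟫ := by
      intro s
      filter_upwards [hC (s + 1)] with ω hω
      have hd : ‖lam • D (s + 1) ω‖ ≤ lam * C (s + 1) := by
        rw [norm_smul, Real.norm_eq_abs, abs_of_pos hlam0]
        exact mul_le_mul_of_nonneg_left hω hlam0.le
      have h := key_vector (F s ω) (lam • D (s + 1) ω) hd
      rw [← hFstep s ω] at h
      have hgin : ⟪g s ω, lam • D (s + 1) ω⟫
          = Real.sinh ‖F s ω‖ / ‖F s ω‖ * ⟪F s ω, lam • D (s + 1) ω⟫ :=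
        real_inner_smul_left _ _ _
      rw [hX]
      simp only
      rw [hgin]
      exact h
    have hlow : ∀ s : ℕ, ∀ (ω : Ω), X s ω + ⟪g s ω, lam • D (s + 1) ω⟫ ≤ X (s + 1) ω := by
      intro s ω
      have h := lower_vector (F s ω) (lam • D (s + 1) ω)
      rw [← hFstep s ω] at h
      have hgin : ⟪g s ω, lam • D (s + 1) ω⟫
          = Real.sinh ‖F s ω‖ / ‖F s ω‖ * ⟪F s ω, lam • D (s + 1) ω⟫ :=
        real_inner_smul_left _ _ _
      rw [hX]
      simp only
      rw [hgin]
      exact h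
    have hIint : ∀ s, Integrable (fun ω => ⟪g s ω, lam • D (s + 1) ω⟫) μ := fun s =>
      integrable_inner_of_bdd ((hgadp s).mono (ℱ.le s)).aestronglyMeasurable (hgbd s) (hDint s)
    have hIcond : ∀ s, μ[fun ω => ⟪g s ω, lam • D (s + 1) ω⟫|ℱ s] =ᵐ[μ] 0 := fun s =>
      condexp_inner_eq_zero (ℱ.le s) (hgadp s) (hgbd s) (hDint s) (hDcond s)
    have hIzero : ∀ s, ∫ ω, ⟪g s ω, lam • D (s + 1) ω⟫ ∂μ = 0 := by
      intro s
      rw [← integral_condExp (ℱ.le s), integral_congr_ae (hIcond s)]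
      simp
    have hsub : Submartingale X ℱ μ := by
      apply submartingale_nat (fun s => hXadp s) hXint
      intro s
      have hsum_int : Integrable (fun ω => X s ω + ⟪g s ω, lam • D (s + 1) ω⟫) μ :=
        (hXint s).add (hIint s)
      have h1 : μ[fun ω => X s ω + ⟪g s ω, lam • D (s + 1) ω⟫|ℱ s] ≤ᵐ[μ] μ[X (s + 1)|ℱ s] :=
        condExp_mono hsum_int (hXint (s + 1)) (Filter.Eventually.of_forall (hlow s))
      have h2 : μ[fun ω => X s ω + ⟪g s ω, lam • D (s + 1) ω⟫|ℱ s]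
          =ᵐ[μ] μ[X s|ℱ s] + μ[fun ω => ⟪g s ω, lam • D (s + 1) ω⟫|ℱ s] :=
        condExp_add (hXint s) (hIint s) (ℱ s)
      have h3 : μ[X s|ℱ s] = X s :=
        condExp_of_stronglyMeasurable (ℱ.le s) (hXadp s) (hXint s)
      filter_upwards [h1, h2, hIcond s] with ω e1 e2 e4
      calc X s ω = (μ[fun ω => X s ω + ⟪g s ω, lam • D (s + 1) ω⟫|ℱ s]) ω := by
            rw [e2, Pi.add_apply, h3, e4]
            simp
        _ ≤ (μ[X (s + 1)|ℱ s]) ω := e1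
    have hEX : ∀ s, ∫ ω, X s ω ∂μ ≤ ∏ t ∈ Finset.range (s + 1), Real.cosh (lam * C t) := by
      intro s
      induction s with
      | zero =>
        have hae : ∀ᵐ ω ∂μ, X 0 ω ≤ Real.cosh (lam * C 0) := by
          filter_upwards [hC 0] with ω hω
          rw [hX]
          simp only
          apply Real.cosh_le_cosh.2
          rw [abs_norm, abs_of_nonneg (mul_nonneg hlam0.le (hCnn 0)), hF]
          simp only
          rw [norm_smul, Real.norm_eq_abs, abs_of_pos hlam0]
          exact mul_le_mul_of_nonneg_left (by simpa using hω) hlam0.le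
        calc ∫ ω, X 0 ω ∂μ ≤ ∫ _ω, Real.cosh (lam * C 0) ∂μ :=
              integral_mono_ae (hXint 0) (integrable_const _) hae
          _ = Real.cosh (lam * C 0) := by simp
          _ = ∏ t ∈ Finset.range 1, Real.cosh (lam * C t) := by
              rw [Finset.prod_range_one]
      | succ n ih =>
        have hstep : ∫ ω, X (n + 1) ω ∂μ ≤
            (∫ ω, X n ω ∂μ) * Real.cosh (lam * C (n + 1)) := by
          have hrint : Integrable (fun ω => X n ω * Real.cosh (lam * C (n + 1)) +
              Real.sinh (lam * C (n + 1)) / (lam * C (n + 1)) *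
                ⟪g n ω, lam • D (n + 1) ω⟫) μ :=
            ((hXint n).mul_const _).add ((hIint n).const_mul _)
          have h := integral_mono_ae (hXint (n + 1)) hrint (hkey n)
          rw [integral_add ((hXint n).mul_const _) ((hIint n).const_mul _),
            integral_mul_const, integral_const_mul, hIzero n, mul_zero, add_zero] at h
          exact h
        calc ∫ ω, X (n + 1) ω ∂μ ≤ (∫ ω, X n ω ∂μ) * Real.cosh (lam * C (n + 1)) := hstep
          _ ≤ (∏ t ∈ Finset.range (n + 1), Real.cosh (lam * C t)) * Real.cosh (lam * C (n + 1)) :=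
              mul_le_mul_of_nonneg_right ih (Real.cosh_pos _).le
          _ = ∏ t ∈ Finset.range (n + 2), Real.cosh (lam * C t) :=
              (Finset.prod_range_succ _ _).symm
    have hEXT : ∫ ω, X T ω ∂μ ≤ Real.exp (ε ^ 2 / (2 * c ^ 2)) := by
      refine (hEX T).trans ?_
      calc ∏ t ∈ Finset.range (T + 1), Real.cosh (lam * C t)
          ≤ ∏ t ∈ Finset.range (T + 1), Real.exp ((lam * C t) ^ 2 / 2) :=
            Finset.prod_le_prod (fun t _ => (Real.cosh_pos _).le)
              (fun t _ => Real.cosh_le_exp_half_sq _)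
        _ = Real.exp (∑ t ∈ Finset.range (T + 1), (lam * C t) ^ 2 / 2) :=
            (Real.exp_sum _ _).symm
        _ ≤ Real.exp (ε ^ 2 / (2 * c ^ 2)) := by
            apply Real.exp_le_exp.2
            have he : ∑ t ∈ Finset.range (T + 1), (lam * C t) ^ 2 / 2
                = lam ^ 2 / 2 * ∑ t ∈ Finset.range (T + 1), C t ^ 2 := by
              rw [Finset.mul_sum]
              exact Finset.sum_congr rfl fun t _ => by ring
            rw [he]
            calc lam ^ 2 / 2 * ∑ t ∈ Finset.range (T + 1), C t ^ 2
                ≤ lam ^ 2 / 2 * c ^ 2 := mul_le_mul_of_nonneg_left hc (by positivity)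
              _ = ε ^ 2 / (2 * c ^ 2) := by
                  rw [hlam]
                  field_simp
    set ε' : NNReal := Real.toNNReal (Real.cosh (lam * ε)) with hε'
    have hnn : (0 : ℕ → Ω → ℝ) ≤ X := fun s ω => hXnn s ω
    have hmax := maximal_ineq hsub hnn (ε := ε') T
    have hcoe : (ε' : ℝ) = Real.cosh (lam * ε) := Real.coe_toNNReal _ (Real.cosh_pos _).le
    have hsubset : {ω | ∃ s ≤ T, ε ≤ ‖∑ t ∈ Finset.range (s + 1), D t ω‖} ⊆
        {ω | (ε' : ℝ) ≤ (Finset.range (T + 1)).sup' Finset.nonempty_range_add_one fun k => X k ω} := by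
      rintro ω ⟨s, hsT, hω⟩
      have h2 : Real.cosh (lam * ε) ≤ X s ω := by
        rw [hX]
        simp only
        apply Real.cosh_le_cosh.2
        rw [abs_norm, abs_of_nonneg (mul_nonneg hlam0.le hε.le), hF]
        simp only
        rw [norm_smul, Real.norm_eq_abs, abs_of_pos hlam0]
        exact mul_le_mul_of_nonneg_left hω hlam0.le
      have h3 : X s ω ≤ (Finset.range (T + 1)).sup' Finset.nonempty_range_add_one fun k => X k ω :=
        Finset.le_sup' (fun k => X k ω) (Finset.mem_range.2 (Nat.lt_succ_of_le hsT))
      exact Set.mem_setOf.2 (by rw [hcoe]; exact h2.trans h3)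
    have hε'ne : (ε' : ℝ≥0∞) ≠ 0 := by
      simp only [ne_eq, ENNReal.coe_eq_zero]
      exact (Real.toNNReal_pos.2 (Real.cosh_pos _)).ne'
    have hchain : μ {ω | (ε' : ℝ) ≤ (Finset.range (T + 1)).sup' Finset.nonempty_range_add_one
        fun k => X k ω} ≤ ENNReal.ofReal (2 * Real.exp (-ε ^ 2 / (2 * c ^ 2))) := by
      have h1 : μ {ω | (ε' : ℝ) ≤ (Finset.range (T + 1)).sup' Finset.nonempty_range_add_one
          fun k => X k ω} * ε' ≤ ENNReal.ofReal (∫ ω in {ω | (ε' : ℝ) ≤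
            (Finset.range (T + 1)).sup' Finset.nonempty_range_add_one fun k => X k ω}, X T ω ∂μ) := by
        rw [mul_comm]
        simpa [ENNReal.smul_def] using hmax
      have h2 := (ENNReal.le_div_iff_mul_le (Or.inl hε'ne) (Or.inl ENNReal.coe_ne_top)).2 h1
      refine h2.trans ?_
      have hIB : ∫ ω in {ω | (ε' : ℝ) ≤ (Finset.range (T + 1)).sup' Finset.nonempty_range_add_one
          fun k => X k ω}, X T ω ∂μ ≤ Real.exp (ε ^ 2 / (2 * c ^ 2)) :=
        (setIntegral_le_integral (hXint T) (Filter.Eventually.of_forall fun ω => hXnn T ω)).trans hEXT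
      have hre : Real.exp (ε ^ 2 / (2 * c ^ 2)) / Real.cosh (lam * ε)
          ≤ 2 * Real.exp (-ε ^ 2 / (2 * c ^ 2)) := by
        rw [div_le_iff₀ (Real.cosh_pos _)]
        have hcosh : Real.exp (lam * ε) / 2 ≤ Real.cosh (lam * ε) := by
          rw [Real.cosh_eq]
          have := Real.exp_pos (-(lam * ε))
          linarith
        have hle : lam * ε = ε ^ 2 / c ^ 2 := by rw [hlam]; field_simp
        have hexp : Real.exp (ε ^ 2 / (2 * c ^ 2))
            = Real.exp (-ε ^ 2 / (2 * c ^ 2)) * Real.exp (ε ^ 2 / c ^ 2) := by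
          rw [← Real.exp_add]
          congr 1
          field_simp
          ring
        rw [hexp, hle]
        have h5 : Real.exp (ε ^ 2 / c ^ 2) ≤ 2 * Real.cosh (ε ^ 2 / c ^ 2) := by
          rw [← hle]
          linarith
        have h6 := Real.exp_pos (-ε ^ 2 / (2 * c ^ 2))
        nlinarith [h5, h6.le]
      calc ENNReal.ofReal (∫ ω in _, X T ω ∂μ) / (ε' : ℝ≥0∞)
          = ENNReal.ofReal (∫ ω in _, X T ω ∂μ) / ENNReal.ofReal (Real.cosh (lam * ε)) := by
            rw [hε']; rfl
        _ = ENNReal.ofReal ((∫ ω in _, X T ω ∂μ) / Real.cosh (lam * ε)) :=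
            (ENNReal.ofReal_div_of_pos (Real.cosh_pos _)).symm
        _ ≤ ENNReal.ofReal (2 * Real.exp (-ε ^ 2 / (2 * c ^ 2))) := by
            apply ENNReal.ofReal_le_ofReal
            refine le_trans ?_ hre
            exact (div_le_div_iff_of_pos_right (Real.cosh_pos _)).2 hIB
    have hfin := le_trans (measure_mono hsubset) hchain
    exact ENNReal.toReal_le_of_le_ofReal (by positivity) hfin
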